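/- Under the hypotheses below, for every R ⊆ V with |R| ≥ p − f, any two vertices of P(R) = N^k(P'(N^k(R))) ∩ R are joined by a path of length at most 30·log₂ p + 2 in the graph G^{2k+1} all of whose vertices belong to P(R); that is, the subgraph of G^{2k+1} induced by P(R) has diameter at most 30·log₂ p + 2. -/

import Mathlib

/-- `ballSet G k S` is the set of vertices of `G` at distance at most `k` from the set `S`,
i.e. vertices reachable from some vertex of `S` by a walk of length at most `k`. -/
def ballSet {V : Type*} (G : SimpleGraph V) (k : ℕ) (S : Set V) : Set V :=
  {v | ∃ u ∈ S, ∃ w : G.Walk u v, w.length ≤ k}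

/-- The `j`-th power of a simple graph `G`: two distinct vertices are adjacent
iff they are joined in `G` by a walk of length at most `j`. -/
def graphPow {V : Type*} (G : SimpleGraph V) (j : ℕ) : SimpleGraph V where
  Adj u v := u ≠ v ∧ ∃ w : G.Walk u v, w.length ≤ j
  symm := by
    refine ⟨?_⟩
    rintro u v ⟨huv, w, hw⟩
    exact ⟨huv.symm, w.reverse, by simpa using hw⟩
  loopless := by
    refine ⟨?_⟩
    rintro v ⟨hv, -⟩
    exact hv rfl

private lemma shortWalkAux {V : Type*} (G : SimpleGraph V) (j : ℕ) {x y : V}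
    (w : G.Walk x y) (hw : w.length ≤ j) :
    ∃ w' : (graphPow G j).Walk x y, w'.length ≤ 1 ∧ ∀ z ∈ w'.support, z = x ∨ z = y := by
  by_cases h : x = y
  · subst h; exact ⟨.nil, by simp, by simp⟩
  · refine ⟨.cons (show (graphPow G j).Adj x y from ⟨h, w, hw⟩) .nil, by simp, ?_⟩
    intro z hz
    simp only [SimpleGraph.Walk.support_cons, SimpleGraph.Walk.support_nil,
      List.mem_cons, List.mem_singleton] at hz
    tauto

private lemma liftWalkAux {V : Type*} (G : SimpleGraph V) (k : ℕ) (S : Set V) (r : V → V)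
    (hr : ∀ x ∈ S, ∃ w : G.Walk x (r x), w.length ≤ k) :
    ∀ {a b : V} (w : G.Walk a b), (∀ x ∈ w.support, x ∈ S) →
      ∃ w' : (graphPow G (2 * k + 1)).Walk (r a) (r b),
        w'.length ≤ w.length ∧ ∀ x ∈ w'.support, ∃ y ∈ S, x = r y := by
  intro a b w
  induction w with
  | nil =>
    intro hs
    exact ⟨.nil, by simp, by
      intro x hx
      simp only [SimpleGraph.Walk.support_nil, List.mem_singleton] at hx
      exact ⟨_, hs _ (by simp), hx⟩⟩
  | @cons a c b h q ih =>
    intro hs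
    have ha : a ∈ S := hs a (by simp)
    have hc : c ∈ S := hs c (by simp)
    have hq : ∀ x ∈ q.support, x ∈ S := fun x hx => hs x (by simp [hx])
    obtain ⟨w', hw'len, hw'sup⟩ := ih hq
    by_cases heq : r a = r c
    · refine ⟨w'.copy heq.symm rfl, by simpa using Nat.le_succ_of_le hw'len, ?_⟩
      intro x hx
      exact hw'sup x (by simpa using hx)
    · obtain ⟨wa, hwa⟩ := hr a ha
      obtain ⟨wc, hwc⟩ := hr c hc
      have hadj : (graphPow G (2 * k + 1)).Adj (r a) (r c) := by
        refine ⟨heq, (wa.reverse.append h.toWalk).append wc, ?_⟩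
        simp only [SimpleGraph.Walk.length_append, SimpleGraph.Walk.length_reverse]
        have : h.toWalk.length = 1 := rfl
        omega
      refine ⟨.cons hadj w', by simpa using Nat.succ_le_succ hw'len, ?_⟩
      intro x hx
      simp only [SimpleGraph.Walk.support_cons, List.mem_cons] at hx
      rcases hx with rfl | hx
      · exact ⟨a, ha, rfl⟩
      · exact hw'sup x hx

/-- Part 3 of the subgraph property (Lemma 2 of the paper, β = 30, γ = 2):
under the expansion hypotheses (E1), (E2) and the properties of `P'`,
for every `R ⊆ V` with `|R| ≥ p - f`, any two vertices of
`P(R) = N^k(P'(N^k(R))) ∩ R` are joined by a path of length at most `30·log₂ p + 2`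
in the graph `G^{2k+1}` all of whose vertices belong to `P(R)`. -/
theorem stmt4 {V : Type*} [Fintype V] (G : SimpleGraph V) (p f k : ℕ)
    (hp : p = Fintype.card V) (hp2 : 2 ≤ p) (hf : f < p) (hk : 0 < k)
    (P' : Set V → Set V)
    (hE1 : ∀ S : Set V, p - f ≤ S.ncard →
      (71 / 72 : ℝ) * p < ((ballSet G k S).ncard : ℝ))
    (hE2 : ∀ S : Set V, S.Nonempty → S.ncard < p - f →
      ((S.ncard : ℝ) / ((p : ℝ) - f)) * ((71 / 72 : ℝ) * p) < ((ballSet G k S).ncard : ℝ))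
    (hP'sub : ∀ L : Set V, (71 / 72 : ℝ) * p ≤ (L.ncard : ℝ) → P' L ⊆ L)
    (hP'card : ∀ L : Set V, (71 / 72 : ℝ) * p ≤ (L.ncard : ℝ) →
      (L.ncard : ℝ) / 6 ≤ ((P' L).ncard : ℝ))
    (hP'diam : ∀ L : Set V, (71 / 72 : ℝ) * p ≤ (L.ncard : ℝ) →
      ∀ u ∈ P' L, ∀ v ∈ P' L, ∃ w : G.Walk u v,
        (w.length : ℝ) ≤ 30 * Real.logb 2 p ∧ ∀ x ∈ w.support, x ∈ P' L)
    (hP'mono : ∀ L0 L1 : Set V, L0 ⊆ L1 → (71 / 72 : ℝ) * p ≤ (L0.ncard : ℝ) →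
      P' L0 ⊆ P' L1)
    (R : Set V) (hR : p - f ≤ R.ncard) :
    ∀ u ∈ ballSet G k (P' (ballSet G k R)) ∩ R,
      ∀ v ∈ ballSet G k (P' (ballSet G k R)) ∩ R,
        ∃ w : (graphPow G (2 * k + 1)).Walk u v,
          (w.length : ℝ) ≤ 30 * Real.logb 2 p + 2 ∧
          ∀ x ∈ w.support, x ∈ ballSet G k (P' (ballSet G k R)) ∩ R := by
  classical
  set L : Set V := ballSet G k R with hLdef
  have hL : (71 / 72 : ℝ) * p ≤ (L.ncard : ℝ) := (hE1 R hR).le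
  have hsubL : P' L ⊆ L := hP'sub L hL
  -- choice function sending each x ∈ P' L to a vertex of R within distance k
  have hNE : Nonempty V := by
    rw [← Fintype.card_pos_iff, ← hp]; omega
  have hch : ∀ x ∈ P' L, ∃ y, y ∈ R ∧ ∃ w : G.Walk x y, w.length ≤ k := by
    intro x hx
    obtain ⟨y, hyR, w, hw⟩ := hsubL hx
    exact ⟨y, hyR, w.reverse, by simpa using hw⟩
  choose! r hrR hrW using hch
  have hrP : ∀ y ∈ P' L, r y ∈ ballSet G k (P' L) ∩ R := by
    intro y hy
    exact ⟨⟨y, hy, hrW y hy⟩, hrR y hy⟩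
  intro u hu v hv
  obtain ⟨⟨u', hu'P, wu, hwu⟩, huR⟩ := hu
  obtain ⟨⟨v', hv'P, wv, hwv⟩, hvR⟩ := hv
  obtain ⟨wm, hwmlen, hwmsup⟩ := hP'diam L hL u' hu'P v' hv'P
  obtain ⟨wm', hm'len, hm'sup⟩ :=
    liftWalkAux G k (P' L) r hrW wm hwmsup
  -- short walk from u to r u'
  obtain ⟨wru', hwru'⟩ := hrW u' hu'P
  obtain ⟨w1, hw1len, hw1sup⟩ := shortWalkAux G (2 * k + 1)
    (wu.reverse.append wru')
    (by simp only [SimpleGraph.Walk.length_append, SimpleGraph.Walk.length_reverse]; omega)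
  -- short walk from r v' to v
  obtain ⟨wrv', hwrv'⟩ := hrW v' hv'P
  obtain ⟨w2, hw2len, hw2sup⟩ := shortWalkAux G (2 * k + 1)
    (wrv'.reverse.append wv)
    (by simp only [SimpleGraph.Walk.length_append, SimpleGraph.Walk.length_reverse]; omega)
  refine ⟨w1.append (wm'.append w2), ?_, ?_⟩
  · have hlen : (w1.append (wm'.append w2)).length = w1.length + wm'.length + w2.length := by
      simp [SimpleGraph.Walk.length_append]; omega
    have h1 : (wm'.length : ℝ) ≤ 30 * Real.logb 2 p :=
      le_trans (by exact_mod_cast hm'len) hwmlen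
    rw [hlen]
    push_cast
    have : (w1.length : ℝ) ≤ 1 := by exact_mod_cast hw1len
    have : (w2.length : ℝ) ≤ 1 := by exact_mod_cast hw2len
    linarith [show (w1.length : ℝ) ≤ 1 from by exact_mod_cast hw1len]
  · intro x hx
    rw [SimpleGraph.Walk.mem_support_append_iff] at hx
    rcases hx with hx | hx
    · rcases hw1sup x hx with rfl | rfl
      · exact ⟨⟨u', hu'P, wu, hwu⟩, huR⟩
      · exact hrP u' hu'P
    · rw [SimpleGraph.Walk.mem_support_append_iff] at hx
      rcases hx with hx | hx
      · obtain ⟨y, hy, rfl⟩ := hm'sup x hx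
        exact hrP y hy
      · rcases hw2sup x hx with rfl | rfl
        · exact hrP v' hv'P
        · exact ⟨⟨v', hv'P, wv, hwv⟩, hvR⟩
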